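/- The positive braid monoid Br_n^+ is left and right cancellative: for all A, B, X, Y ∈ Br_n^+, if A X B = A Y B then X = Y (in particular A X = A Y implies X = Y, and X B = Y B implies X = Y). -/

import Mathlib

/-- The braid relations on the free monoid on `m` generators `σ_1, …, σ_m` (0-indexed):
`σ_i σ_j = σ_j σ_i` for `|i - j| > 1` and `σ_i σ_{i+1} σ_i = σ_{i+1} σ_i σ_{i+1}`. -/
def braidMonoidRels (m : ℕ) : FreeMonoid (Fin m) → FreeMonoid (Fin m) → Prop := fun a b =>
  (∃ i j : Fin m, (i : ℕ) + 1 < (j : ℕ) ∧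
    a = FreeMonoid.of i * FreeMonoid.of j ∧ b = FreeMonoid.of j * FreeMonoid.of i) ∨
  (∃ i j : Fin m, (i : ℕ) + 1 = (j : ℕ) ∧
    a = FreeMonoid.of i * FreeMonoid.of j * FreeMonoid.of i ∧
    b = FreeMonoid.of j * FreeMonoid.of i * FreeMonoid.of j)

/-- The positive braid monoid `Br_n⁺`, presented by the generators `σ_1, …, σ_{n-1}`
(0-indexed) and the braid relations. -/
abbrev BraidMonoid (n : ℕ) : Type := PresentedMonoid (braidMonoidRels (n - 1))

/-- The standard generator `σ_{i+1}` of `Br_n⁺` (0-indexed). -/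
def σp {n : ℕ} (i : Fin (n - 1)) : BraidMonoid n :=
  PresentedMonoid.of (braidMonoidRels (n - 1)) i


namespace Braid

variable {m : ℕ}

def brel (a b : List (Fin m)) : Prop :=
  (∃ i j : Fin m, (i : ℕ) + 1 < (j : ℕ) ∧ a = [i, j] ∧ b = [j, i]) ∨
  (∃ i j : Fin m, (i : ℕ) + 1 = (j : ℕ) ∧ a = [i, j, i] ∧ b = [j, i, j])

def stp (a b : List (Fin m)) : Prop :=
  ∃ x y p q : List (Fin m), (brel x y ∨ brel y x) ∧ a = p ++ x ++ q ∧ b = p ++ y ++ q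

def eqv : List (Fin m) → List (Fin m) → Prop := Relation.ReflTransGen stp

theorem stp.symm {a b : List (Fin m)} (h : stp a b) : stp b a := by
  obtain ⟨x, y, p, q, hxy, h1, h2⟩ := h
  exact ⟨y, x, p, q, hxy.symm, h2, h1⟩

theorem eqv.refl (a : List (Fin m)) : eqv a a := Relation.ReflTransGen.refl

theorem eqv.symm {a b : List (Fin m)} (h : eqv a b) : eqv b a :=
  (@Relation.ReflTransGen.symmetric _ _ ⟨fun _ _ hs => hs.symm⟩).symm _ _ h

theorem eqv.trans {a b c : List (Fin m)} (h1 : eqv a b) (h2 : eqv b c) : eqv a c :=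
  Relation.ReflTransGen.trans h1 h2

theorem stp.eqv {a b : List (Fin m)} (h : stp a b) : eqv a b :=
  Relation.ReflTransGen.single h

theorem brel_len {a b : List (Fin m)} (h : brel a b) : a.length = b.length := by
  rcases h with ⟨i, j, _, rfl, rfl⟩ | ⟨i, j, _, rfl, rfl⟩ <;> rfl

theorem brel_len2 {a b : List (Fin m)} (h : brel a b) : 2 ≤ a.length := by
  rcases h with ⟨i, j, _, rfl, rfl⟩ | ⟨i, j, _, rfl, rfl⟩ <;> simp

theorem stp_len {a b : List (Fin m)} (h : stp a b) : a.length = b.length := by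
  obtain ⟨x, y, p, q, hxy, rfl, rfl⟩ := h
  rcases hxy with h | h <;> simp [brel_len h]

theorem eqv_len {a b : List (Fin m)} (h : eqv a b) : a.length = b.length := by
  induction h with
  | refl => rfl
  | tail _ hs ih => exact ih.trans (stp_len hs)

theorem stp_app {a b : List (Fin m)} (c d : List (Fin m)) (h : stp a b) :
    stp (c ++ a ++ d) (c ++ b ++ d) := by
  obtain ⟨x, y, p, q, hxy, rfl, rfl⟩ := h
  exact ⟨x, y, c ++ p, q ++ d, hxy, by simp, by simp⟩

theorem eqv_app {a b : List (Fin m)} (c d : List (Fin m)) (h : eqv a b) :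
    eqv (c ++ a ++ d) (c ++ b ++ d) := by
  induction h with
  | refl => exact eqv.refl _
  | tail _ hs ih => exact ih.trans (stp.eqv (stp_app c d hs))

theorem ec {a b : List (Fin m)} (x : Fin m) (h : eqv a b) : eqv (x :: a) (x :: b) := by
  simpa using eqv_app [x] [] h

theorem eqv_appL {a b : List (Fin m)} (c : List (Fin m)) (h : eqv a b) :
    eqv (c ++ a) (c ++ b) := by simpa using eqv_app c [] h

theorem eqv_appR {a b : List (Fin m)} (d : List (Fin m)) (h : eqv a b) :
    eqv (a ++ d) (b ++ d) := by simpa using eqv_app [] d h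

theorem eqv_congr {a b c d : List (Fin m)} (h1 : eqv a b) (h2 : eqv c d) :
    eqv (a ++ c) (b ++ d) := (eqv_appR c h1).trans (eqv_appL b h2)

def far (i j : Fin m) : Prop := (i : ℕ) + 1 < (j : ℕ) ∨ (j : ℕ) + 1 < (i : ℕ)
def adj (i j : Fin m) : Prop := (i : ℕ) + 1 = (j : ℕ) ∨ (j : ℕ) + 1 = (i : ℕ)

theorem far.symm {i j : Fin m} (h : far i j) : far j i := Or.symm h
theorem adj.symm {i j : Fin m} (h : adj i j) : adj j i := Or.symm h

theorem tri (i j : Fin m) : i = j ∨ adj i j ∨ far i j := by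
  by_cases h : (i : ℕ) = (j : ℕ)
  · exact Or.inl (Fin.ext h)
  · right; unfold adj far; omega

def wrd (i j : Fin m) : List (Fin m) :=
  if i = j then [] else if (i : ℕ) + 1 = (j : ℕ) ∨ (j : ℕ) + 1 = (i : ℕ) then [j, i] else [j]

theorem wrd_self (i : Fin m) : wrd i i = [] := by simp [wrd]

theorem adj_ne {i j : Fin m} (h : adj i j) : i ≠ j := by
  rcases h with h | h <;> (intro he; subst he; omega)

theorem far_ne {i j : Fin m} (h : far i j) : i ≠ j := by
  rcases h with h | h <;> (intro he; subst he; omega)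

theorem wrd_adj {i j : Fin m} (h : adj i j) : wrd i j = [j, i] := by
  rw [wrd, if_neg (adj_ne h), if_pos (show (i : ℕ) + 1 = (j : ℕ) ∨ (j : ℕ) + 1 = (i : ℕ) from h)]

theorem wrd_far {i j : Fin m} (h : far i j) : wrd i j = [j] := by
  rw [wrd, if_neg (far_ne h), if_neg]
  rcases h with h | h <;> omega

theorem swap {i j : Fin m} (h : far i j) (t : List (Fin m)) :
    eqv (i :: j :: t) (j :: i :: t) := by
  apply stp.eqv
  rcases h with h | h
  · exact ⟨[i, j], [j, i], [], t, Or.inl (Or.inl ⟨i, j, h, rfl, rfl⟩), rfl, rfl⟩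
  · exact ⟨[i, j], [j, i], [], t, Or.inr (Or.inl ⟨j, i, h, rfl, rfl⟩), rfl, rfl⟩

theorem braid {i j : Fin m} (h : adj i j) (t : List (Fin m)) :
    eqv (i :: j :: i :: t) (j :: i :: j :: t) := by
  apply stp.eqv
  rcases h with h | h
  · exact ⟨[i, j, i], [j, i, j], [], t, Or.inl (Or.inr ⟨i, j, h, rfl, rfl⟩), rfl, rfl⟩
  · exact ⟨[i, j, i], [j, i, j], [], t, Or.inr (Or.inr ⟨j, i, h, rfl, rfl⟩), rfl, rfl⟩

theorem stp_single {i : Fin m} {b : List (Fin m)} (h : stp [i] b) : False := by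
  obtain ⟨x, y, p, q, hxy, h1, _⟩ := h
  have hx : 2 ≤ x.length := by
    rcases hxy with h | h
    · exact brel_len2 h
    · exact brel_len h ▸ brel_len2 h
  have := congrArg List.length h1
  simp at this
  omega

inductive cn : ℕ → List (Fin m) → List (Fin m) → Prop
  | zero (a) : cn 0 a a
  | succ {a b c : List (Fin m)} {k : ℕ} : stp a b → cn k b c → cn (k + 1) a c

theorem cn_eqv {k : ℕ} {a b : List (Fin m)} (h : cn k a b) : eqv a b := by
  induction h with
  | zero => exact eqv.refl _
  | succ hs _ ih => exact (stp.eqv hs).trans ih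

theorem cn.tail {k : ℕ} {a b c : List (Fin m)} (h : cn k a b) (hs : stp b c) :
    cn (k + 1) a c := by
  induction h with
  | zero => exact cn.succ hs (cn.zero _)
  | succ hs' _ ih => exact cn.succ hs' (ih hs)

theorem eqv_cn {a b : List (Fin m)} (h : eqv a b) : ∃ k, cn k a b := by
  induction h with
  | refl => exact ⟨0, cn.zero _⟩
  | tail _ hs ih => obtain ⟨k, hk⟩ := ih; exact ⟨k + 1, hk.tail hs⟩

end Braid

namespace Braid
variable {m : ℕ}

theorem key (n : ℕ) : ∀ (k : ℕ) (i j : Fin m) (u v : List (Fin m)),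
    u.length ≤ n → cn k (i :: u) (j :: v) →
    ∃ z, eqv u (wrd i j ++ z) ∧ eqv v (wrd j i ++ z) := by
  induction n with
  | zero =>
    intro k i j u v hu hc
    have hu0 : u = [] := List.eq_nil_of_length_eq_zero (Nat.le_zero.mp hu)
    subst hu0
    cases hc with
    | zero => exact ⟨[], by rw [wrd_self]; exact ⟨eqv.refl _, eqv.refl _⟩⟩
    | succ hs _ => exact (stp_single hs).elim
  | succ n IHn =>
    intro k
    induction k with
    | zero =>
      intro i j u v hu hc
      cases hc
      exact ⟨u, by rw [wrd_self]; exact ⟨eqv.refl _, eqv.refl _⟩⟩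
    | succ k IHk =>
      intro i j u v hu hc
      have IH : ∀ (i j : Fin m) (u v : List (Fin m)), u.length ≤ n → eqv (i :: u) (j :: v) →
          ∃ z, eqv u (wrd i j ++ z) ∧ eqv v (wrd j i ++ z) := by
        intro i j u v h he
        obtain ⟨k', hk'⟩ := eqv_cn he
        exact IHn k' i j u v h hk'
      obtain ⟨b, hs, hc'⟩ : ∃ b, stp (i :: u) b ∧ cn k b (j :: v) := by
        cases hc with | succ hs hc' => exact ⟨_, hs, hc'⟩
      obtain ⟨x, y, p, q, hxy, h1, h2⟩ := hs
      cases p with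
      | cons c p' =>
        rw [List.cons_append, List.cons_append] at h1
        injection h1 with hic h1
        subst hic
        rw [h2, List.cons_append, List.cons_append] at hc'
        have hstep : stp u (p' ++ y ++ q) := ⟨x, y, p', q, hxy, h1, rfl⟩
        have hlen : (p' ++ y ++ q).length ≤ n + 1 := by rw [← stp_len hstep]; exact hu
        obtain ⟨z, hz1, hz2⟩ := IHk i j (p' ++ y ++ q) v hlen hc'
        exact ⟨z, (stp.eqv hstep).trans hz1, hz2⟩
      | nil =>
        simp only [List.nil_append] at h1 h2
        have hcase : (∃ a t, far i a ∧ u = a :: t ∧ b = a :: i :: t) ∨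
            (∃ a t, adj i a ∧ u = a :: i :: t ∧ b = a :: i :: a :: t) := by
          rcases hxy with hb | hb <;>
            rcases hb with ⟨i', j', hij, hx, hy⟩ | ⟨i', j', hij, hx, hy⟩ <;>
            subst hx <;> subst hy <;>
            simp only [List.cons_append, List.nil_append] at h1 h2 <;>
            injection h1 with e1 e2 <;> subst e1
          · exact Or.inl ⟨j', q, Or.inl hij, e2, h2⟩
          · exact Or.inr ⟨j', q, Or.inl hij, e2, h2⟩
          · exact Or.inl ⟨i', q, Or.inr hij, e2, h2⟩
          · exact Or.inr ⟨i', q, Or.inr hij, e2, h2⟩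
        clear h1 h2 hxy
        rcases hcase with ⟨a, t, hfar, rfl, rfl⟩ | ⟨a, t, hadj, rfl, rfl⟩
        · -- B1 : far i a, u = a :: t, b = a :: i :: t
          have lt : t.length ≤ n := by simp only [List.length_cons] at hu; omega
          obtain ⟨z, hz1, hz2⟩ := IHk a j (i :: t) v
            (by simp only [List.length_cons]; omega) hc'
          rcases tri a j with rfl | haj | haj
          · -- B1.1 : a = j
            rw [wrd_self, List.nil_append] at hz1 hz2
            refine ⟨t, ?_, ?_⟩
            · rw [wrd_far hfar]; exact eqv.refl _
            · rw [wrd_far hfar.symm]; exact hz2.trans hz1.symm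
          · -- B1.3 : adj a j
            rw [wrd_adj haj] at hz1; rw [wrd_adj haj.symm] at hz2
            simp only [List.cons_append, List.nil_append] at hz1 hz2
            have e1 := eqv_len hz1
            simp only [List.length_cons] at e1
            obtain ⟨z₁, g1, g2⟩ := IH i j t (a :: z) lt hz1
            rcases tri i j with rfl | hij | hij
            · exact (by rcases hfar with h | h <;> rcases haj with h' | h' <;> omega : False).elim
            · -- B1.3.3 : adj i j  (hard case)
              rw [wrd_adj hij] at g1; rw [wrd_adj hij.symm] at g2
              simp only [List.cons_append, List.nil_append] at g1 g2
              have e2 := eqv_len g1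
              simp only [List.length_cons] at e2
              obtain ⟨z₂, g3, g4⟩ := IH a i z (j :: z₁) (by omega) g2
              rw [wrd_far hfar.symm] at g3; rw [wrd_far hfar] at g4
              simp only [List.cons_append, List.nil_append] at g3 g4
              obtain ⟨z₃, g5, g6⟩ := IH j a z₁ z₂ (by omega) g4
              rw [wrd_adj haj.symm] at g5; rw [wrd_adj haj] at g6
              simp only [List.cons_append, List.nil_append] at g5 g6
              refine ⟨a :: j :: i :: z₃, ?_, ?_⟩
              · rw [wrd_adj hij]
                simp only [List.cons_append, List.nil_append]
                refine ((ec a g1).trans (ec a (ec j (ec i g5)))).trans ?_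
                refine (ec a (ec j (swap hfar (j :: z₃)))).trans ?_
                refine (braid haj (i :: j :: z₃)).trans ?_
                refine (ec j (ec a (braid hij.symm z₃))).trans ?_
                exact ec j (swap hfar.symm (j :: i :: z₃))
              · rw [wrd_adj hij.symm]
                simp only [List.cons_append, List.nil_append]
                refine (hz2.trans (ec a (ec j g3))).trans ?_
                refine (ec a (ec j (ec i g6))).trans ?_
                refine (ec a (braid hij.symm (a :: z₃))).trans ?_
                refine (swap hfar.symm (j :: i :: a :: z₃)).trans ?_
                refine (ec i (ec a (ec j (swap hfar z₃)))).trans ?_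
                exact ec i (braid haj (i :: z₃))
            · -- B1.3.2 : far i j
              rw [wrd_far hij] at g1; rw [wrd_far hij.symm] at g2
              simp only [List.cons_append, List.nil_append] at g1 g2
              obtain ⟨z₂, g3, g4⟩ := IH a i z z₁ (by omega) g2
              rw [wrd_far hfar.symm] at g3; rw [wrd_far hfar] at g4
              simp only [List.cons_append, List.nil_append] at g3 g4
              refine ⟨a :: j :: z₂, ?_, ?_⟩
              · rw [wrd_far hij]
                simp only [List.cons_append, List.nil_append]
                exact ((ec a g1).trans (ec a (ec j g4))).trans (braid haj z₂)
              · rw [wrd_far hij.symm]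
                simp only [List.cons_append, List.nil_append]
                refine (hz2.trans (ec a (ec j g3))).trans ?_
                refine (ec a (swap hij.symm z₂)).trans ?_
                exact swap hfar.symm (j :: z₂)
          · -- B1.2 : far a j
            rw [wrd_far haj] at hz1; rw [wrd_far haj.symm] at hz2
            simp only [List.cons_append, List.nil_append] at hz1 hz2
            obtain ⟨z₁, g1, g2⟩ := IH i j t z lt hz1
            rcases tri i j with rfl | hij | hij
            · rw [wrd_self, List.nil_append] at g1 g2
              refine ⟨a :: z₁, ?_, ?_⟩
              · rw [wrd_self, List.nil_append]; exact ec a g1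
              · rw [wrd_self, List.nil_append]; exact hz2.trans (ec a g2)
            · rw [wrd_adj hij] at g1; rw [wrd_adj hij.symm] at g2
              simp only [List.cons_append, List.nil_append] at g1 g2
              refine ⟨a :: z₁, ?_, ?_⟩
              · rw [wrd_adj hij]
                simp only [List.cons_append, List.nil_append]
                refine (ec a g1).trans ?_
                refine (swap haj (i :: z₁)).trans ?_
                exact ec j (swap hfar.symm z₁)
              · rw [wrd_adj hij.symm]
                simp only [List.cons_append, List.nil_append]
                refine (hz2.trans (ec a g2)).trans ?_
                refine (swap hfar.symm (j :: z₁)).trans ?_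
                exact ec i (swap haj z₁)
            · rw [wrd_far hij] at g1; rw [wrd_far hij.symm] at g2
              simp only [List.cons_append, List.nil_append] at g1 g2
              refine ⟨a :: z₁, ?_, ?_⟩
              · rw [wrd_far hij]
                simp only [List.cons_append, List.nil_append]
                exact (ec a g1).trans (swap haj z₁)
              · rw [wrd_far hij.symm]
                simp only [List.cons_append, List.nil_append]
                exact (hz2.trans (ec a g2)).trans (swap hfar.symm z₁)
        · -- B2 : adj i a, u = a :: i :: t, b = a :: i :: a :: t
          have lt : t.length + 1 ≤ n := by simp only [List.length_cons] at hu; omega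
          obtain ⟨z, hz1, hz2⟩ := IHk a j (i :: a :: t) v
            (by simp only [List.length_cons]; omega) hc'
          rcases tri a j with rfl | haj | haj
          · -- B2.1 : a = j
            rw [wrd_self, List.nil_append] at hz1 hz2
            refine ⟨t, ?_, ?_⟩
            · rw [wrd_adj hadj]
              simp only [List.cons_append, List.nil_append]
              exact eqv.refl _
            · rw [wrd_adj hadj.symm]
              simp only [List.cons_append, List.nil_append]
              exact hz2.trans hz1.symm
          · -- B2.3 : adj a j
            rw [wrd_adj haj] at hz1; rw [wrd_adj haj.symm] at hz2
            simp only [List.cons_append, List.nil_append] at hz1 hz2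
            have e1 := eqv_len hz1
            simp only [List.length_cons] at e1
            obtain ⟨z₁, g1, g2⟩ := IH i j (a :: t) (a :: z)
              (by simp only [List.length_cons]; omega) hz1
            rcases tri i j with rfl | hij | hij
            · -- B2.3.1 : i = j
              rw [wrd_self, List.nil_append] at g1 g2
              have g3 : eqv (a :: t) (a :: z) := g1.trans g2.symm
              obtain ⟨z₂, g4, g5⟩ := IH a a t z (by omega) g3
              rw [wrd_self, List.nil_append] at g4 g5
              refine ⟨a :: i :: t, ?_, ?_⟩
              · rw [wrd_self, List.nil_append]; exact eqv.refl _
              · rw [wrd_self, List.nil_append]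
                exact hz2.trans (ec a (ec i (g5.trans g4.symm)))
            · -- adj i j : impossible
              exact (by
                rcases hadj with h1 | h1 <;> rcases haj with h2 | h2 <;>
                  rcases hij with h3 | h3 <;> omega : False).elim
            · -- B2.3.2 : far i j
              rw [wrd_far hij] at g1; rw [wrd_far hij.symm] at g2
              simp only [List.cons_append, List.nil_append] at g1 g2
              have e2 := eqv_len g1
              simp only [List.length_cons] at e2
              obtain ⟨z₂, g3, g4⟩ := IH a j t z₁ (by omega) g1
              rw [wrd_adj haj] at g3; rw [wrd_adj haj.symm] at g4
              simp only [List.cons_append, List.nil_append] at g3 g4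
              have e3 := eqv_len g3
              simp only [List.length_cons] at e3
              have g5 : eqv (a :: z) (i :: a :: j :: z₂) := g2.trans (ec i g4)
              obtain ⟨z₃, g6, g7⟩ := IH a i z (a :: j :: z₂) (by omega) g5
              rw [wrd_adj hadj.symm] at g6; rw [wrd_adj hadj] at g7
              simp only [List.cons_append, List.nil_append] at g6 g7
              have g8 : eqv (j :: z₂) (i :: z₃) := by
                obtain ⟨z', ga, gb⟩ := IH a a (j :: z₂) (i :: z₃)
                  (by simp only [List.length_cons]; omega) g7
                rw [wrd_self, List.nil_append] at ga gb
                exact ga.trans gb.symm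
              obtain ⟨z₄, g9, g10⟩ := IH j i z₂ z₃ (by omega) g8
              rw [wrd_far hij.symm] at g9; rw [wrd_far hij] at g10
              simp only [List.cons_append, List.nil_append] at g9 g10
              refine ⟨a :: i :: j :: a :: z₄, ?_, ?_⟩
              · rw [wrd_far hij]
                simp only [List.cons_append, List.nil_append]
                refine (ec a (ec i g3)).trans ?_
                refine (ec a (ec i (ec j (ec a g9)))).trans ?_
                refine (ec a (swap hij (a :: i :: z₄))).trans ?_
                refine (ec a (ec j (braid hadj z₄))).trans ?_
                refine (braid haj (i :: a :: z₄)).trans ?_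
                exact ec j (ec a (swap hij.symm (a :: z₄)))
              · rw [wrd_far hij.symm]
                simp only [List.cons_append, List.nil_append]
                refine (hz2.trans (ec a (ec j g6))).trans ?_
                refine (ec a (ec j (ec i (ec a g10)))).trans ?_
                refine (ec a (swap hij.symm (a :: j :: z₄))).trans ?_
                refine (ec a (ec i (braid haj.symm z₄))).trans ?_
                exact braid hadj.symm (j :: a :: z₄)
          · -- B2.2 : far a j
            rw [wrd_far haj] at hz1; rw [wrd_far haj.symm] at hz2
            simp only [List.cons_append, List.nil_append] at hz1 hz2
            have e1 := eqv_len hz1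
            simp only [List.length_cons] at e1
            obtain ⟨z₁, g1, g2⟩ := IH i j (a :: t) z
              (by simp only [List.length_cons]; omega) hz1
            rcases tri i j with rfl | hij | hij
            · exact (by
                rcases hadj with h1 | h1 <;> rcases haj with h2 | h2 <;> omega : False).elim
            · -- B2.2.3 : adj i j
              rw [wrd_adj hij] at g1; rw [wrd_adj hij.symm] at g2
              simp only [List.cons_append, List.nil_append] at g1 g2
              have e2 := eqv_len g1
              simp only [List.length_cons] at e2
              obtain ⟨z₂, g3, g4⟩ := IH a j t (i :: z₁) (by omega) g1
              rw [wrd_far haj] at g3; rw [wrd_far haj.symm] at g4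
              simp only [List.cons_append, List.nil_append] at g3 g4
              obtain ⟨z₃, g5, g6⟩ := IH i a z₁ z₂ (by omega) g4
              rw [wrd_adj hadj] at g5; rw [wrd_adj hadj.symm] at g6
              simp only [List.cons_append, List.nil_append] at g5 g6
              refine ⟨a :: i :: j :: z₃, ?_, ?_⟩
              · rw [wrd_adj hij]
                simp only [List.cons_append, List.nil_append]
                refine (ec a (ec i g3)).trans ?_
                refine (ec a (ec i (ec j g6))).trans ?_
                refine (ec a (braid hij (a :: z₃))).trans ?_
                refine (swap haj (i :: j :: a :: z₃)).trans ?_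
                refine (ec j (ec a (ec i (swap haj.symm z₃)))).trans ?_
                exact ec j (braid hadj.symm (j :: z₃))
              · rw [wrd_adj hij.symm]
                simp only [List.cons_append, List.nil_append]
                refine (hz2.trans (ec a g2)).trans ?_
                refine (ec a (ec i (ec j g5))).trans ?_
                refine (ec a (ec i (swap haj.symm (i :: z₃)))).trans ?_
                refine (braid hadj.symm (j :: i :: z₃)).trans ?_
                refine (ec i (ec a (braid hij z₃))).trans ?_
                exact ec i (swap haj (i :: j :: z₃))
            · -- B2.2.2 : far i j
              rw [wrd_far hij] at g1; rw [wrd_far hij.symm] at g2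
              simp only [List.cons_append, List.nil_append] at g1 g2
              have e2 := eqv_len g1
              simp only [List.length_cons] at e2
              obtain ⟨z₂, g3, g4⟩ := IH a j t z₁ (by omega) g1
              rw [wrd_far haj] at g3; rw [wrd_far haj.symm] at g4
              simp only [List.cons_append, List.nil_append] at g3 g4
              refine ⟨a :: i :: z₂, ?_, ?_⟩
              · rw [wrd_far hij]
                simp only [List.cons_append, List.nil_append]
                refine (ec a (ec i g3)).trans ?_
                refine (ec a (swap hij z₂)).trans ?_
                exact swap haj (i :: z₂)
              · rw [wrd_far hij.symm]
                simp only [List.cons_append, List.nil_append]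
                refine (hz2.trans (ec a g2)).trans ?_
                refine (ec a (ec i g4)).trans ?_
                exact braid hadj.symm z₂
end Braid

namespace Braid
variable {m : ℕ}

theorem key' {i j : Fin m} {u v : List (Fin m)} (h : eqv (i :: u) (j :: v)) :
    ∃ z, eqv u (wrd i j ++ z) ∧ eqv v (wrd j i ++ z) := by
  obtain ⟨k, hk⟩ := eqv_cn h
  exact key u.length k i j u v le_rfl hk

theorem cancel_cons {i : Fin m} {u v : List (Fin m)} (h : eqv (i :: u) (i :: v)) : eqv u v := by
  obtain ⟨z, h1, h2⟩ := key' h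
  rw [wrd_self, List.nil_append] at h1 h2
  exact h1.trans h2.symm

theorem cancel_left {u v : List (Fin m)} (a : List (Fin m)) (h : eqv (a ++ u) (a ++ v)) :
    eqv u v := by
  induction a with
  | nil => simpa using h
  | cons x a ih => exact ih (cancel_cons (by simpa using h))

theorem stp_rev {a b : List (Fin m)} (h : stp a b) : stp a.reverse b.reverse := by
  obtain ⟨x, y, p, q, hxy, rfl, rfl⟩ := h
  refine ⟨x.reverse, y.reverse, q.reverse, p.reverse, ?_, by simp, by simp⟩
  rcases hxy with h | h <;> rcases h with ⟨i, j, hij, rfl, rfl⟩ | ⟨i, j, hij, rfl, rfl⟩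
  · exact Or.inr (Or.inl ⟨i, j, hij, by simp, by simp⟩)
  · exact Or.inl (Or.inr ⟨i, j, hij, by simp, by simp⟩)
  · exact Or.inl (Or.inl ⟨i, j, hij, by simp, by simp⟩)
  · exact Or.inr (Or.inr ⟨i, j, hij, by simp, by simp⟩)

theorem eqv_rev {a b : List (Fin m)} (h : eqv a b) : eqv a.reverse b.reverse := by
  induction h with
  | refl => exact eqv.refl _
  | tail _ hs ih => exact ih.trans (stp.eqv (stp_rev hs))

theorem cancel_right {u v : List (Fin m)} (b : List (Fin m)) (h : eqv (u ++ b) (v ++ b)) :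
    eqv u v := by
  have h1 := eqv_rev h
  simp only [List.reverse_append] at h1
  have h2 := cancel_left _ h1
  have h3 := eqv_rev h2
  simpa using h3

theorem rels_iff (m : ℕ) (a b : FreeMonoid (Fin m)) :
    braidMonoidRels m a b ↔ brel a.toList b.toList := Iff.rfl

theorem congen_to_eqv {a b : FreeMonoid (Fin m)} (h : ConGen.Rel (braidMonoidRels m) a b) :
    eqv a.toList b.toList := by
  induction h with
  | of x y hxy =>
      exact stp.eqv ⟨x.toList, y.toList, [], [], Or.inl ((rels_iff m x y).mp hxy), by simp, by simp⟩
  | refl => exact eqv.refl _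
  | symm _ ih => exact ih.symm
  | trans _ _ ih1 ih2 => exact ih1.trans ih2
  | mul _ _ ih1 ih2 =>
      simp only [FreeMonoid.toList_mul]
      exact eqv_congr ih1 ih2

theorem eqv_to_congen : ∀ {la lb : List (Fin m)}, eqv la lb →
    ConGen.Rel (braidMonoidRels m) (FreeMonoid.ofList la) (FreeMonoid.ofList lb) := by
  intro la lb h
  induction h with
  | refl => exact ConGen.Rel.refl _
  | tail _ hs ih =>
      refine ih.trans ?_
      obtain ⟨x, y, p, q, hxy, rfl, rfl⟩ := hs
      have hxyc : ConGen.Rel (braidMonoidRels m) (FreeMonoid.ofList x) (FreeMonoid.ofList y) := by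
        rcases hxy with h | h
        · exact ConGen.Rel.of _ _ ((rels_iff m _ _).mpr h)
        · exact (ConGen.Rel.of _ _ ((rels_iff m _ _).mpr h)).symm
      have := ConGen.Rel.mul (ConGen.Rel.refl (FreeMonoid.ofList p))
        (ConGen.Rel.mul hxyc (ConGen.Rel.refl (FreeMonoid.ofList q)))
      simpa [FreeMonoid.ofList_append, mul_assoc] using this

theorem mk_eq_iff (m : ℕ) (a b : FreeMonoid (Fin m)) :
    PresentedMonoid.mk (braidMonoidRels m) a = PresentedMonoid.mk (braidMonoidRels m) b ↔
      eqv a.toList b.toList := by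
  constructor
  · intro h
    have h' : ConGen.Rel (braidMonoidRels m) a b := Quotient.exact h
    exact congen_to_eqv h'
  · intro h
    have h' : ConGen.Rel (braidMonoidRels m) a b := eqv_to_congen h
    exact Quotient.sound h'

theorem pm_left_cancel (m : ℕ) (A X Y : PresentedMonoid (braidMonoidRels m))
    (h : A * X = A * Y) : X = Y := by
  obtain ⟨a, rfl⟩ := PresentedMonoid.surjective_mk A
  obtain ⟨x, rfl⟩ := PresentedMonoid.surjective_mk X
  obtain ⟨y, rfl⟩ := PresentedMonoid.surjective_mk Y
  rw [← map_mul, ← map_mul] at h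
  have h' := (mk_eq_iff m _ _).mp h
  simp only [FreeMonoid.toList_mul] at h'
  exact (mk_eq_iff m x y).mpr (cancel_left a.toList h')

theorem pm_right_cancel (m : ℕ) (B X Y : PresentedMonoid (braidMonoidRels m))
    (h : X * B = Y * B) : X = Y := by
  obtain ⟨b, rfl⟩ := PresentedMonoid.surjective_mk B
  obtain ⟨x, rfl⟩ := PresentedMonoid.surjective_mk X
  obtain ⟨y, rfl⟩ := PresentedMonoid.surjective_mk Y
  rw [← map_mul, ← map_mul] at h
  have h' := (mk_eq_iff m _ _).mp h
  simp only [FreeMonoid.toList_mul] at h'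
  exact (mk_eq_iff m x y).mpr (cancel_right b.toList h')

end Braid

/-- **Garside.** The positive braid monoid `Br_n⁺` is left and right cancellative: if
`A X B = A Y B` then `X = Y`; in particular `A X = A Y` implies `X = Y` and `X B = Y B`
implies `X = Y`. -/
theorem braid_monoid_cancellative (n : ℕ) :
    (∀ A B X Y : BraidMonoid n, A * X * B = A * Y * B → X = Y) ∧
    (∀ A X Y : BraidMonoid n, A * X = A * Y → X = Y) ∧
    (∀ B X Y : BraidMonoid n, X * B = Y * B → X = Y) := by
  refine ⟨?_, ?_, ?_⟩
  · intro A B X Y h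
    exact Braid.pm_left_cancel _ A X Y (Braid.pm_right_cancel _ B (A * X) (A * Y) h)
  · intro A X Y h
    exact Braid.pm_left_cancel _ A X Y h
  · intro B X Y h
    exact Braid.pm_right_cancel _ B X Y h
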